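/- arXiv:1207.4650 — 2 statements merged into one kernel-verified Lean document; each statement's English description precedes it below -/
import Mathlib

section
/- Let G be a finitely generated group, p a prime, x a nontrivial element of G, and H a finite-index normal subgroup of G such that x^m ∈ H but no smaller positive power of x lies in H. Let π : G → G/⟨⟨x^m⟩⟩ be the quotient map by the normal closure of x^m in G. Then d_p(π(H)) ≥ d_p(H) - [G : H]/m; equivalently, with q(K) := d_p(K)/[G : K] (and noting [π(G) : π(H)] = [G : H]), one has q(π(H)) ≥ q(H) - 1/m. -/
open scoped Pointwise
open scoped commutatorElement


/-- `dGen G` is the minimal number of generators of the group `G`. -/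
noncomputable def dGen (G : Type*) [Group G] : ℕ :=
  sInf {n : ℕ | ∃ S : Finset G, S.card = n ∧ Subgroup.closure (S : Set G) = ⊤}

/-- The rank gradient of `G`. -/
noncomputable def rankGradient (G : Type*) [Group G] : ℝ :=
  sInf {r : ℝ | ∃ H : Subgroup G, H.index ≠ 0 ∧ r = ((dGen H : ℝ) - 1) / (H.index : ℝ)}

/-- The subgroup `[G,G]G^p` of `G` (as a normal closure of its generators). -/
def pCommPow (p : ℕ) (G : Type*) [Group G] : Subgroup G :=
  Subgroup.normalClosure ({x | ∃ a b : G, x = ⁅a, b⁆} ∪ {x | ∃ g : G, x = g ^ p})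

instance pCommPow_normal (p : ℕ) (G : Type*) [Group G] : (pCommPow p G).Normal :=
  Subgroup.normalClosure_normal

/-- `d_p(G) = d(G/([G,G]G^p))`. -/
noncomputable def dp (p : ℕ) (G : Type*) [Group G] : ℕ :=
  dGen (G ⧸ pCommPow p G)

/-- The `p`-gradient of `G`. -/
noncomputable def pGradient (p : ℕ) (G : Type*) [Group G] : ℝ :=
  sInf {r : ℝ | ∃ H : Subgroup G, H.Normal ∧ (∃ k : ℕ, H.index = p ^ k) ∧
    r = ((dp p H : ℝ) - 1) / (H.index : ℝ)}

/-- The `p`-residual: intersection of all normal subgroups of `p`-power index. -/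
def pResidual (p : ℕ) (G : Type*) [Group G] : Subgroup G :=
  ⨅ H ∈ {H : Subgroup G | H.Normal ∧ ∃ k : ℕ, H.index = p ^ k}, H

instance pResidual_normal (p : ℕ) (G : Type*) [Group G] : (pResidual p G).Normal := by
  constructor
  intro n hn g
  simp only [pResidual, Subgroup.mem_iInf] at hn ⊢
  intro H hH
  exact hH.1.conj_mem n (hn H hH) g


lemma dGen_le {Q : Type*} [Group Q] {S : Finset Q} (h : Subgroup.closure (S : Set Q) = ⊤) :
    dGen Q ≤ S.card := Nat.sInf_le ⟨S, rfl, h⟩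

lemma dGen_spec (Q : Type*) [Group Q] [Group.FG Q] :
    ∃ S : Finset Q, S.card = dGen Q ∧ Subgroup.closure (S : Set Q) = ⊤ := by
  have hne : {n : ℕ | ∃ S : Finset Q, S.card = n ∧ Subgroup.closure (S : Set Q) = ⊤}.Nonempty := by
    obtain ⟨n, S, hS1, hS2⟩ := Group.fg_iff'.mp ‹Group.FG Q›
    exact ⟨n, S, hS1, hS2⟩
  have := Nat.sInf_mem hne
  exact this

/-- mod-p abelianization quotient is commutative -/
lemma pquot_comm (p : ℕ) (A : Type*) [Group A] (u v : A ⧸ pCommPow p A) : u * v = v * u := by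
  obtain ⟨a, rfl⟩ := QuotientGroup.mk'_surjective (pCommPow p A) u
  obtain ⟨b, rfl⟩ := QuotientGroup.mk'_surjective (pCommPow p A) v
  show ((a * b : A) : A ⧸ pCommPow p A) = ((b * a : A) : A ⧸ pCommPow p A)
  rw [QuotientGroup.eq]
  refine Subgroup.subset_normalClosure (Or.inl ⟨b⁻¹, a⁻¹, ?_⟩)
  group

lemma pquot_closure_normal (p : ℕ) (A : Type*) [Group A] (s : Set (A ⧸ pCommPow p A)) :
    (Subgroup.closure s).Normal := by
  constructor
  intro n hn g
  have : g * n * g⁻¹ = n := by rw [pquot_comm p A g n, mul_assoc, mul_inv_cancel, mul_one]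
  rwa [this]

lemma map_pCommPow {p : ℕ} {A B : Type*} [Group A] [Group B] (φ : A →* B)
    (hφ : Function.Surjective φ) : (pCommPow p A).map φ = pCommPow p B := by
  unfold pCommPow
  rw [Subgroup.map_normalClosure _ _ hφ]
  congr 1
  ext y
  constructor
  · rintro ⟨z, hz, rfl⟩
    rcases hz with ⟨a, b, rfl⟩ | ⟨g, rfl⟩
    · exact Or.inl ⟨φ a, φ b, (map_commutatorElement φ a b)⟩
    · exact Or.inr ⟨φ g, (map_pow φ g p)⟩
  · rintro (⟨a, b, rfl⟩ | ⟨g, rfl⟩)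
    · obtain ⟨a', rfl⟩ := hφ a; obtain ⟨b', rfl⟩ := hφ b
      exact ⟨⁅a', b'⁆, Or.inl ⟨a', b', rfl⟩, (map_commutatorElement φ a' b')⟩
    · obtain ⟨g', rfl⟩ := hφ g
      exact ⟨g' ^ p, Or.inr ⟨g', rfl⟩, (map_pow φ g' p)⟩

lemma dp_le_of_surj (p : ℕ) {A B : Type*} [Group A] [Group B] [Group.FG A]
    (φ : A →* B) (hφ : Function.Surjective φ) (S : Finset A)
    (hker : φ.ker ≤ Subgroup.normalClosure (S : Set A)) :
    dp p A ≤ dp p B + S.card := by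
  classical
  haveI : Group.FG B := Group.fg_of_surjective hφ
  set θ : A →* A ⧸ pCommPow p A := QuotientGroup.mk' (pCommPow p A) with hθ
  have hθs : Function.Surjective θ := QuotientGroup.mk'_surjective _
  set ψ : A →* B ⧸ pCommPow p B := (QuotientGroup.mk' (pCommPow p B)).comp φ with hψ
  have hψs : Function.Surjective ψ := (QuotientGroup.mk'_surjective _).comp hφ
  have hkerψ : ψ.ker = pCommPow p A ⊔ φ.ker := by
    have h1 : ψ.ker = Subgroup.comap φ (pCommPow p B) := by
      ext a
      simp [hψ, MonoidHom.mem_ker, QuotientGroup.eq_one_iff]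
    rw [h1, ← map_pCommPow φ hφ, Subgroup.comap_map_eq]
  have hle : pCommPow p A ≤ ψ.ker := hkerψ ▸ le_sup_left
  set ψ' : (A ⧸ pCommPow p A) →* B ⧸ pCommPow p B :=
    QuotientGroup.lift (pCommPow p A) ψ (fun a ha => hle ha) with hψ'
  have hψ'θ : ∀ a : A, ψ' (θ a) = ψ a := fun a => rfl
  have hψ's : Function.Surjective ψ' := by
    intro b; obtain ⟨a, rfl⟩ := hψs b; exact ⟨θ a, rfl⟩
  haveI : Group.FG (B ⧸ pCommPow p B) := Group.fg_of_surjective (QuotientGroup.mk'_surjective _)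
  -- kernel of ψ' is within closure of θ '' S
  have hkerle : ψ'.ker ≤ Subgroup.closure (θ '' (S : Set A)) := by
    intro u hu
    obtain ⟨a, rfl⟩ := hθs u
    have ha : a ∈ ψ.ker := by rwa [MonoidHom.mem_ker, ← hψ'θ]
    rw [hkerψ] at ha
    have h2 : θ a ∈ (pCommPow p A ⊔ φ.ker).map θ := Subgroup.mem_map_of_mem θ ha
    rw [Subgroup.map_sup] at h2
    have h3 : (pCommPow p A).map θ = ⊥ := by
      rw [Subgroup.map_eq_bot_iff, hθ, QuotientGroup.ker_mk']
    have h4 : (φ.ker).map θ ≤ Subgroup.closure (θ '' (S : Set A)) := by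
      refine le_trans (Subgroup.map_mono hker) ?_
      rw [Subgroup.map_normalClosure _ _ hθs]
      haveI := pquot_closure_normal p A (θ '' (S : Set A))
      exact Subgroup.normalClosure_le_normal Subgroup.subset_closure
    rw [h3, bot_sup_eq] at h2
    exact h4 h2
  obtain ⟨T, hTcard, hTgen⟩ := dGen_spec (B ⧸ pCommPow p B)
  obtain ⟨U, hUimg, hUcard⟩ : ∃ U : Finset (A ⧸ pCommPow p A),
      ψ' '' (U : Set _) = (T : Set _) ∧ U.card ≤ T.card := by
    refine ⟨T.image (Function.surjInv hψ's), ?_, Finset.card_image_le⟩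
    rw [Finset.coe_image, Set.image_image]
    simp only [Function.surjInv_eq hψ's, Set.image_id']
  have h5 : (Subgroup.closure (U : Set _)).map ψ' = ⊤ := by
    rw [MonoidHom.map_closure, hUimg, hTgen]
  have h6 : Subgroup.closure (U : Set _) ⊔ ψ'.ker = ⊤ := by
    rw [← Subgroup.comap_map_eq, h5, Subgroup.comap_top]
  have htop : Subgroup.closure (((U ∪ S.image θ : Finset _)) : Set (A ⧸ pCommPow p A)) = ⊤ := by
    rw [Finset.coe_union, Finset.coe_image, Subgroup.closure_union, eq_top_iff, ← h6]
    exact sup_le_sup_left hkerle _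
  calc dp p A ≤ (U ∪ S.image θ).card := dGen_le htop
    _ ≤ U.card + (S.image θ).card := Finset.card_union_le _ _
    _ ≤ T.card + S.card := add_le_add hUcard Finset.card_image_le
    _ = dp p B + S.card := by rw [hTcard]; rfl

/-- with `π : G → G/⟪x^m⟫` the quotient by the normal closure of `x^m`,
`d_p(π(H)) ≥ d_p(H) - [G : H]/m`; equivalently, with `q(K) = d_p(K)/[G : K]`,
`q(π(H)) ≥ q(H) - 1/m`. -/
theorem dp_quotient_lower_bound (p : ℕ) (hp : p.Prime) (G : Type*) [Group G] [Group.FG G] (x : G) (hx : x ≠ 1)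
    (H : Subgroup G) [H.Normal] (hfin : H.index ≠ 0) (m : ℕ) (hm : 0 < m)
    (hxm : x ^ m ∈ H) (hmin : ∀ j : ℕ, 0 < j → j < m → x ^ j ∉ H) :
    ((dp p (H.map (QuotientGroup.mk' (Subgroup.normalClosure {x ^ m}))) : ℝ)
        ≥ (dp p H : ℝ) - (H.index : ℝ) / (m : ℝ)) ∧
    ((dp p (H.map (QuotientGroup.mk' (Subgroup.normalClosure {x ^ m}))) : ℝ) /
        ((H.map (QuotientGroup.mk' (Subgroup.normalClosure {x ^ m}))).index : ℝ)
      ≥ (dp p H : ℝ) / (H.index : ℝ) - 1 / (m : ℝ)) := by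
  classical
  set N : Subgroup G := Subgroup.normalClosure {x ^ m} with hN
  have hNH : N ≤ H := Subgroup.normalClosure_le_normal (by simpa using hxm)
  set J : Subgroup G := H ⊔ Subgroup.zpowers x with hJ
  have hHJ : H ≤ J := le_sup_left
  -- order of x mod H is m
  have hord : orderOf ((x : G) : G ⧸ H) = m := by
    rw [orderOf_eq_iff hm]
    constructor
    · rw [← QuotientGroup.mk_pow, QuotientGroup.eq_one_iff]
      exact hxm
    · intro j hjm hj hone
      rw [← QuotientGroup.mk_pow, QuotientGroup.eq_one_iff] at hone
      exact hmin j hj hjm hone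
  -- relative index of H in J is m
  have hrel : H.relIndex J = m := by
    set ρ : J →* G ⧸ H := (QuotientGroup.mk' H).comp J.subtype with hρ
    have hkerρ : ρ.ker = H.subgroupOf J := by
      ext j
      simp [hρ, MonoidHom.mem_ker, QuotientGroup.eq_one_iff, Subgroup.mem_subgroupOf]
    have hrangeρ : ρ.range = Subgroup.zpowers ((x : G) : G ⧸ H) := by
      rw [hρ, MonoidHom.range_comp, Subgroup.range_subtype, hJ, Subgroup.map_sup,
        MonoidHom.map_zpowers]
      have : H.map (QuotientGroup.mk' H) = ⊥ := by
        rw [Subgroup.map_eq_bot_iff, QuotientGroup.ker_mk']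
      rw [this, bot_sup_eq]
      rfl
    have h1 : H.relIndex J = Nat.card (J ⧸ ρ.ker) := by
      rw [hkerρ]; rfl
    rw [h1, Nat.card_congr (QuotientGroup.quotientKerEquivRange ρ).toEquiv, hrangeρ,
      Nat.card_zpowers, hord]
  have hindex : m * J.index = H.index := by
    rw [← hrel]; exact Subgroup.relIndex_mul_index hHJ
  have hJne : J.index ≠ 0 := fun h0 => hfin (by rw [← hindex, h0, mul_zero])
  haveI : Finite (G ⧸ J) := by
    rw [Subgroup.index_eq_card] at hJne
    exact (Nat.card_ne_zero.mp hJne).2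
  haveI := Fintype.ofFinite (G ⧸ J)
  -- the finite set of normal generators
  have hmemH : ∀ g : G, g * x ^ m * g⁻¹ ∈ H := fun g => ‹H.Normal›.conj_mem _ hxm g
  set c : (G ⧸ J) → H := fun q => ⟨q.out * x ^ m * q.out⁻¹, hmemH q.out⟩ with hc
  set S : Finset H := Finset.univ.image c with hS
  have hScard : S.card ≤ J.index := by
    rw [Subgroup.index_eq_card, Nat.card_eq_fintype_card, ← Finset.card_univ]
    exact Finset.card_image_le
  -- key claim: every conjugate of x^m lies in (the image of) the normal closure of S
  have hstar : ∀ g : G, (⟨g * x ^ m * g⁻¹, hmemH g⟩ : H) ∈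
      Subgroup.normalClosure (S : Set H) := by
    intro g
    set q : G ⧸ J := QuotientGroup.mk g with hq
    set r : G := q.out with hr
    have hrg : r⁻¹ * g ∈ J := by
      rw [← QuotientGroup.eq]
      rw [hr, QuotientGroup.out_eq']
    have : r⁻¹ * g ∈ (Subgroup.zpowers x : Set G) * (H : Set G) := by
      rw [← Subgroup.mul_normal (Subgroup.zpowers x) H]
      have hJJ : Subgroup.zpowers x ⊔ H = J := by rw [hJ, sup_comm]
      rw [hJJ]
      exact hrg
    obtain ⟨xt, hxt, h, hh, hmul⟩ := this
    obtain ⟨t, rfl⟩ := hxt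
    have hmul' : x ^ t * h = r⁻¹ * g := hmul
    have hg : g = r * (x ^ t * h) := by
      rw [hmul']; group
    have hk : x ^ t * h * x ^ (-t) ∈ H := by
      simpa using ‹H.Normal›.conj_mem h hh (x ^ t)
    have hidty : g * x ^ m * g⁻¹ =
        (r * (x ^ t * h * x ^ (-t)) * r⁻¹) * (r * x ^ m * r⁻¹) *
          (r * (x ^ t * h * x ^ (-t)) * r⁻¹)⁻¹ := by
      rw [hg]; group
    have hSmem : (⟨r * x ^ m * r⁻¹, hmemH r⟩ : H) ∈ Subgroup.normalClosure (S : Set H) :=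
      Subgroup.subset_normalClosure (by
        rw [hS]
        exact Finset.mem_coe.mpr (Finset.mem_image.mpr ⟨q, Finset.mem_univ q, rfl⟩))
    have hconj := Subgroup.normalClosure_normal.conj_mem _ hSmem
      ⟨r * (x ^ t * h * x ^ (-t)) * r⁻¹, ‹H.Normal›.conj_mem _ hk r⟩
    convert hconj using 1
    exact Subtype.ext hidty
  -- N is contained in the image of the normal closure of S
  set M' : Subgroup G := (Subgroup.normalClosure (S : Set H)).map H.subtype with hM'
  have hNM : N ≤ M' := by
    rw [hN]
    show Subgroup.closure (Group.conjugatesOfSet {x ^ m}) ≤ M'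
    refine (Subgroup.closure_le M').mpr ?_
    intro y hy
    rw [Group.mem_conjugatesOfSet_iff] at hy
    obtain ⟨a, ha, hconj⟩ := hy
    rw [Set.mem_singleton_iff] at ha; subst ha
    obtain ⟨cg, hcg⟩ := isConj_iff.mp hconj
    exact ⟨⟨cg * x ^ m * cg⁻¹, hmemH cg⟩, hstar cg, hcg⟩
  -- the projection H → π(H) and its kernel
  set φ := (QuotientGroup.mk' N).subgroupMap H with hφ
  have hφs := (QuotientGroup.mk' N).subgroupMap_surjective H
  have hkerφ : φ.ker ≤ Subgroup.normalClosure (S : Set H) := by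
    intro hh hker
    have h1 : ((hh : G) : G ⧸ N) = 1 := by
      have h2 : ((φ hh : ↥(H.map (QuotientGroup.mk' N))) : G ⧸ N) = 1 := by
        rw [MonoidHom.mem_ker.mp hker]; rfl
      exact h2
    rw [QuotientGroup.eq_one_iff] at h1
    obtain ⟨k, hk, hke⟩ := hNM h1
    have hkh : k = hh := Subtype.ext (by simpa using hke)
    rwa [← hkh]
  haveI : H.FiniteIndex := ⟨hfin⟩
  haveI : Group.FG ↥H := Subgroup.fg_of_index_ne_zero H
  have hmain : dp p ↥H ≤ dp p ↥(H.map (QuotientGroup.mk' N)) + S.card :=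
    dp_le_of_surj p φ hφs S hkerφ
  have himgidx : (H.map (QuotientGroup.mk' N)).index = H.index := by
    rw [Subgroup.index_map, QuotientGroup.ker_mk', sup_of_le_left hNH,
      MonoidHom.range_eq_top_of_surjective _ (QuotientGroup.mk'_surjective N),
      Subgroup.index_top, mul_one]
  have hmpos : (0:ℝ) < m := by exact_mod_cast hm
  have hHpos : (0:ℝ) < H.index := by
    exact_mod_cast Nat.pos_of_ne_zero hfin
  have hScard' : (S.card : ℝ) ≤ (H.index : ℝ) / m := by
    rw [le_div_iff₀ hmpos]
    have h3 : S.card * m ≤ H.index := by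
      rw [← hindex, mul_comm m J.index]
      exact Nat.mul_le_mul_right _ hScard
    exact_mod_cast h3
  have h1 : (dp p ↥H : ℝ) ≤ (dp p ↥(H.map (QuotientGroup.mk' N)) : ℝ) + S.card := by
    exact_mod_cast hmain
  constructor
  · linarith
  · rw [himgidx, ge_iff_le]
    have key : (dp p ↥H : ℝ) - (H.index : ℝ) / m ≤ dp p ↥(H.map (QuotientGroup.mk' N)) := by
      linarith
    have heq : (dp p ↥H : ℝ) / H.index - 1 / m
        = ((dp p ↥H : ℝ) - (H.index : ℝ) / m) / H.index := by
      field_simp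
    rw [heq]
    exact (div_le_div_iff_of_pos_right hHpos).mpr key
end

section
/- Let G be a finitely generated group, p a prime, k a nonnegative integer, and x ∈ G. Suppose that x^{p^k} lies in every normal subgroup of G of index a power of p. Then RG_p(G/⟨⟨x^{p^k}⟩⟩) = RG_p(G), where ⟨⟨x^{p^k}⟩⟩ is the normal closure of x^{p^k} in G. -/
open scoped commutatorElement

/-! ### Auxiliary lemmas -/

open Subgroup Function

section Aux

variable {p : ℕ} {G : Type*} [Group G]

/-- The generating set of `pCommPow`. -/
def pSet (p : ℕ) (G : Type*) [Group G] : Set G :=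
  {x | ∃ a b : G, x = ⁅a, b⁆} ∪ {x | ∃ g : G, x = g ^ p}

lemma pCommPow_def (p : ℕ) (G : Type*) [Group G] :
    pCommPow p G = Subgroup.normalClosure (pSet p G) := rfl

lemma pSet_conj {g a : G} (ha : a ∈ pSet p G) : g * a * g⁻¹ ∈ pSet p G := by
  rcases ha with ⟨b, c, rfl⟩ | ⟨b, rfl⟩
  · exact Or.inl ⟨g * b * g⁻¹, g * c * g⁻¹, conjugate_commutatorElement b c g⟩
  · exact Or.inr ⟨g * b * g⁻¹, conj_pow.symm⟩

lemma closure_normal_of_conj {s : Set G} (h : ∀ g : G, ∀ a ∈ s, g * a * g⁻¹ ∈ s) :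
    (Subgroup.closure s).Normal := by
  constructor
  intro n hn g
  induction hn using Subgroup.closure_induction with
  | mem a ha => exact Subgroup.subset_closure (h g a ha)
  | one => simpa using Subgroup.one_mem _
  | mul a b _ _ iha ihb =>
      have hg : g * (a * b) * g⁻¹ = (g * a * g⁻¹) * (g * b * g⁻¹) := by group
      rw [hg]; exact Subgroup.mul_mem _ iha ihb
  | inv a _ iha =>
      have hg : g * a⁻¹ * g⁻¹ = (g * a * g⁻¹)⁻¹ := by group
      rw [hg]; exact Subgroup.inv_mem _ iha

lemma normalClosure_eq_closure_of_conj {s : Set G}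
    (h : ∀ g : G, ∀ a ∈ s, g * a * g⁻¹ ∈ s) :
    Subgroup.normalClosure s = Subgroup.closure s := by
  haveI := closure_normal_of_conj h
  exact le_antisymm (Subgroup.normalClosure_le_normal Subgroup.subset_closure)
    Subgroup.closure_le_normalClosure

lemma pCommPow_eq_closure (p : ℕ) (G : Type*) [Group G] :
    pCommPow p G = Subgroup.closure (pSet p G) :=
  normalClosure_eq_closure_of_conj fun _ _ ha => pSet_conj ha

lemma image_pSet {B : Type*} [Group B] (f : G →* B) (hf : Surjective f) :
    f '' pSet p G = pSet p B := by
  ext y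
  constructor
  · rintro ⟨z, hz | hz, rfl⟩
    · obtain ⟨a, b, rfl⟩ := hz
      exact Or.inl ⟨f a, f b, map_commutatorElement f a b⟩
    · obtain ⟨a, rfl⟩ := hz
      exact Or.inr ⟨f a, map_pow f a p⟩
  · rintro (⟨a, b, rfl⟩ | ⟨a, rfl⟩)
    · obtain ⟨a', rfl⟩ := hf a
      obtain ⟨b', rfl⟩ := hf b
      exact ⟨⁅a', b'⁆, Or.inl ⟨a', b', rfl⟩, map_commutatorElement f a' b'⟩
    · obtain ⟨a', rfl⟩ := hf a
      exact ⟨a' ^ p, Or.inr ⟨a', rfl⟩, map_pow f a' p⟩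

lemma map_pCommPow_s11 {B : Type*} [Group B] (f : G →* B) (hf : Surjective f) :
    (pCommPow p G).map f = pCommPow p B := by
  rw [pCommPow_def, Subgroup.map_normalClosure _ _ hf, image_pSet f hf, pCommPow_def]

lemma genSet_mem {A B : Type*} [Group A] [Group B] (e : A ≃* B) {n : ℕ}
    (h : ∃ S : Finset A, S.card = n ∧ Subgroup.closure (S : Set A) = ⊤) :
    ∃ S : Finset B, S.card = n ∧ Subgroup.closure (S : Set B) = ⊤ := by
  obtain ⟨S, hc, ht⟩ := h
  refine ⟨S.map ⟨e, e.injective⟩, by rw [Finset.card_map, hc], ?_⟩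
  have h2 := MonoidHom.map_closure e.toMonoidHom (S : Set A)
  rw [ht, Subgroup.map_top_of_surjective _ e.surjective] at h2
  simp only [Finset.coe_map, Function.Embedding.coeFn_mk, MulEquiv.coe_toMonoidHom] at h2 ⊢
  exact h2.symm

lemma dGen_eq_of_mulEquiv {A B : Type*} [Group A] [Group B] (e : A ≃* B) :
    dGen A = dGen B := by
  unfold dGen
  congr 1
  ext n
  exact ⟨fun h => genSet_mem e h, fun h => genSet_mem e.symm h⟩

lemma dp_eq_of_surjective {A B : Type*} [Group A] [Group B] {p : ℕ} (f : A →* B)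
    (hf : Surjective f) (hker : f.ker ≤ pCommPow p A) : dp p B = dp p A := by
  have hmap : (pCommPow p A).map f = pCommPow p B := map_pCommPow_s11 f hf
  set ψ := (QuotientGroup.mk' (pCommPow p B)).comp f with hψdef
  have hψ : Surjective ψ := (QuotientGroup.mk'_surjective _).comp hf
  have hkψ : ψ.ker = pCommPow p A := by
    rw [hψdef, ← MonoidHom.comap_ker, QuotientGroup.ker_mk', ← hmap,
      Subgroup.comap_map_eq, sup_eq_left.mpr hker]
  exact (dGen_eq_of_mulEquiv
    (((QuotientGroup.quotientMulEquivOfEq hkψ.symm).trans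
      (QuotientGroup.quotientKerEquivOfSurjective ψ hψ)) :
        A ⧸ pCommPow p A ≃* B ⧸ pCommPow p B)).symm

lemma index_pCommPow_pow {A : Type*} [Group A] [Group.FG A] {p : ℕ} (hp : p.Prime) :
    ∃ m : ℕ, (pCommPow p A).index = p ^ m := by
  haveI : Fact p.Prime := ⟨hp⟩
  have hpow : ∀ q : A ⧸ pCommPow p A, q ^ p = 1 := by
    intro q
    refine QuotientGroup.induction_on q fun a => ?_
    have : ((a ^ p : A) : A ⧸ pCommPow p A) = 1 :=
      (QuotientGroup.eq_one_iff _).mpr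
        (Subgroup.subset_normalClosure (Or.inr ⟨a, rfl⟩))
    simpa using this
  have hcomm : ∀ q r : A ⧸ pCommPow p A, q * r = r * q := by
    intro q r
    refine QuotientGroup.induction_on q fun a => QuotientGroup.induction_on r fun b => ?_
    have hmem : (a * b)⁻¹ * (b * a) ∈ pCommPow p A := by
      refine Subgroup.subset_normalClosure (Or.inl ⟨b⁻¹, a⁻¹, ?_⟩)
      rw [commutatorElement_def]; group
    calc (a : A ⧸ pCommPow p A) * b = ((a * b : A) : A ⧸ pCommPow p A) := rfl
      _ = ((b * a : A) : A ⧸ pCommPow p A) := (QuotientGroup.eq).mpr hmem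
      _ = (b : A ⧸ pCommPow p A) * a := rfl
  letI : CommGroup (A ⧸ pCommPow p A) :=
    { (inferInstance : Group (A ⧸ pCommPow p A)) with mul_comm := hcomm }
  have htor : Monoid.IsTorsion (A ⧸ pCommPow p A) := fun q =>
    isOfFinOrder_iff_pow_eq_one.mpr ⟨p, hp.pos, hpow q⟩
  haveI : Group.FG (A ⧸ pCommPow p A) := inferInstance
  haveI : Finite (A ⧸ pCommPow p A) := CommGroup.finite_of_fg_torsion (A ⧸ pCommPow p A) htor
  have hpg : IsPGroup p (A ⧸ pCommPow p A) := fun q => ⟨1, by rw [pow_one]; exact hpow q⟩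
  obtain ⟨m, hm⟩ := IsPGroup.iff_card.mp hpg
  exact ⟨m, by rw [Subgroup.index_eq_card]; exact hm⟩

end Aux

/-- if `x^{p^k}` lies in every normal subgroup of `p`-power index,
then `RG_p(G/⟪x^{p^k}⟫) = RG_p(G)`. -/
theorem pGradient_quotient_eq (G : Type*) [Group G] [Group.FG G]
    (p : ℕ) (hp : p.Prime) (k : ℕ) (x : G)
    (hmem : ∀ H : Subgroup G, H.Normal → (∃ l : ℕ, H.index = p ^ l) → x ^ p ^ k ∈ H) :
    pGradient p (G ⧸ Subgroup.normalClosure {x ^ p ^ k}) = pGradient p G := by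
  set N : Subgroup G := Subgroup.normalClosure {x ^ p ^ k} with hNdef
  set π : G →* G ⧸ N := QuotientGroup.mk' N with hπdef
  have hπsurj : Surjective π := QuotientGroup.mk'_surjective N
  -- key lemma
  have key : ∀ H : Subgroup G, H.Normal → (∃ l : ℕ, H.index = p ^ l) →
      N ≤ H ∧ dp p (H.map π) = dp p H := by
    intro H hHN hidx
    haveI := hHN
    have hNleH : N ≤ H :=
      Subgroup.normalClosure_le_normal (by
        intro y hy
        rcases hy with rfl
        exact hmem H hHN hidx)
    obtain ⟨l, hl⟩ := hidx
    haveI : H.FiniteIndex := ⟨by rw [hl]; exact pow_ne_zero l hp.ne_zero⟩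
    haveI : Group.FG H := Subgroup.fg_of_index_ne_zero H
    obtain ⟨m, hm⟩ := index_pCommPow_pow (A := H) hp
    -- the image of pCommPow p H in G
    set K : Subgroup G := Subgroup.closure (H.subtype '' pSet p H) with hKdef
    have hconj : ∀ g : G, ∀ a ∈ H.subtype '' pSet p H, g * a * g⁻¹ ∈ H.subtype '' pSet p H := by
      rintro g a ⟨b, hb, rfl⟩
      rcases hb with ⟨c, d, rfl⟩ | ⟨c, rfl⟩
      · refine ⟨⁅(⟨g * c * g⁻¹, hHN.conj_mem c c.2 g⟩ : H),
          (⟨g * d * g⁻¹, hHN.conj_mem d d.2 g⟩ : H)⁆, Or.inl ⟨_, _, rfl⟩, ?_⟩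
        rw [map_commutatorElement]
        simpa using (conjugate_commutatorElement (c : G) (d : G) g).symm
      · refine ⟨(⟨g * c * g⁻¹, hHN.conj_mem c c.2 g⟩ : H) ^ p, Or.inr ⟨_, rfl⟩, ?_⟩
        rw [map_pow]
        simpa using conj_pow.symm
    haveI hKnormal : K.Normal := closure_normal_of_conj hconj
    have hKmap : (pCommPow p H).map H.subtype = K := by
      rw [pCommPow_eq_closure, MonoidHom.map_closure, hKdef]
    have hKsub : K.subgroupOf H = pCommPow p H := by
      rw [Subgroup.subgroupOf, ← hKmap,
        Subgroup.comap_map_eq_self_of_injective (Subgroup.subtype_injective H)]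
    have hKleH : K ≤ H := by
      rw [hKdef]
      refine (Subgroup.closure_le H).mpr ?_
      rintro y ⟨b, _, rfl⟩
      exact b.2
    have hKindex : ∃ j : ℕ, K.index = p ^ j := by
      refine ⟨m + l, ?_⟩
      have := Subgroup.relIndex_mul_index hKleH
      rw [← this, Subgroup.relIndex, hKsub, hm, hl, pow_add]
    have hxK : x ^ p ^ k ∈ K := hmem K hKnormal hKindex
    have hNleK : N ≤ K :=
      Subgroup.normalClosure_le_normal (by intro y hy; rcases hy with rfl; exact hxK)
    -- the restriction of π to H
    have hkerle : (π.subgroupMap H).ker ≤ pCommPow p H := by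
      intro h hh
      have h1 : π (h : G) = 1 := by
        have := Subtype.ext_iff.mp hh
        simpa using this
      have h2 : (h : G) ∈ N := by
        rw [← QuotientGroup.ker_mk' N]
        exact h1
      have h3 : (h : G) ∈ K := hNleK h2
      rw [← hKsub]
      exact Subgroup.mem_subgroupOf.mpr h3
    exact ⟨hNleH, dp_eq_of_surjective (π.subgroupMap H)
      (MonoidHom.subgroupMap_surjective π H) hkerle⟩
  -- the two defining sets coincide
  unfold pGradient
  congr 1
  ext r
  simp only [Set.mem_setOf_eq]
  constructor
  · rintro ⟨H', hH'N, ⟨l, hl⟩, rfl⟩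
    refine ⟨H'.comap π, hH'N.comap π, ?_⟩
    have hidx : (H'.comap π).index = H'.index := by
      rw [Subgroup.index_comap, MonoidHom.range_eq_top.mpr hπsurj,
        Subgroup.relIndex_top_right]
    have hmapH : (H'.comap π).map π = H' :=
      Subgroup.map_comap_eq_self_of_surjective hπsurj H'
    obtain ⟨-, hdp⟩ := key (H'.comap π) (hH'N.comap π) ⟨l, by rw [hidx, hl]⟩
    rw [hmapH] at hdp
    exact ⟨⟨l, by rw [hidx, hl]⟩, by rw [hidx, hdp]⟩
  · rintro ⟨H, hHN, ⟨l, hl⟩, rfl⟩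
    obtain ⟨hNleH, hdp⟩ := key H hHN ⟨l, hl⟩
    refine ⟨H.map π, hHN.map π hπsurj, ?_⟩
    have hcomap : (H.map π).comap π = H := by
      rw [Subgroup.comap_map_eq, QuotientGroup.ker_mk', sup_eq_left.mpr hNleH]
    have hidx : (H.map π).index = H.index := by
      conv_rhs => rw [← hcomap]
      rw [Subgroup.index_comap, MonoidHom.range_eq_top.mpr hπsurj,
        Subgroup.relIndex_top_right]
    exact ⟨⟨l, by rw [hidx, hl]⟩, by rw [hidx, hdp]⟩
end
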